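/- arXiv:2311.15466 — 2 statements merged into one kernel-verified Lean document; each statement's English description precedes it below -/
import Mathlib

section
/- Let A = (a1,a2), B = (b1,b2), C = (c1,c2) be points in Z^2 such that the set Ω = {(x,y) ∈ Z^2 : a1 ≤ x ≤ b1, a2 ≤ y ≤ c2, b2 - b1 ≤ y - x ≤ c2 - c1} is nonempty. Then for every X ∈ Z^2, d(A,X) + d(B,X) + d(C,X) ≥ (-a1 - a2 + 2b1 - b2 - c1 + 2c2)/3, with equality if and only if X ∈ Ω, where d is the asymmetric distance on the directed lattice graph Γ. -/
/-- The forward steps of the directed graph `Γ` on `ℤ × ℤ`: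
from `(x,y)` there are edges to `(x+1,y)`, `(x,y+1)`, `(x-1,y-1)`. -/
def fwdSteps : List (ℤ × ℤ) := [(1, 0), (0, 1), (-1, -1)]

/-- A step of a path: an edge traversed either forwards or backwards. -/
def IsStep (s : ℤ × ℤ) : Prop := s ∈ fwdSteps ∨ -s ∈ fwdSteps

/-- The cost of a step: `1/3` forwards, `2/3` backwards. -/
noncomputable def stepCost (s : ℤ × ℤ) : ℝ :=
  if s ∈ fwdSteps then 1/3 else 2/3

/-- The length of a path, given as its list of steps. -/
noncomputable def pathLen (l : List (ℤ × ℤ)) : ℝ := (l.map stepCost).sum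

/-- The set of lengths of paths from `a` to `b` in `Γ`. -/
def pathLengths (a b : ℤ × ℤ) : Set ℝ :=
  {c | ∃ l : List (ℤ × ℤ), (∀ s ∈ l, IsStep s) ∧ a + l.sum = b ∧ pathLen l = c}

/-- The asymmetric distance on `Γ`: the infimum (in fact minimum) of path lengths. -/
noncomputable def latticeDist (a b : ℤ × ℤ) : ℝ := sInf (pathLengths a b)

def Dmax (x y : ℤ) : ℤ := max (x + y) (max (y - 2*x) (x - 2*y))

lemma step_bound (p q : ℤ)
    (h : ∀ s ∈ fwdSteps, p * s.1 + q * s.2 ≤ 1 ∧ -(p * s.1 + q * s.2) ≤ 2) :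
    ∀ s : ℤ × ℤ, IsStep s → ((p * s.1 + q * s.2 : ℤ) : ℝ) ≤ 3 * stepCost s := by
  intro s hs
  unfold stepCost
  by_cases hmem : s ∈ fwdSteps
  · simp only [hmem, if_true]
    have := (h s hmem).1
    have : ((p * s.1 + q * s.2 : ℤ) : ℝ) ≤ 1 := by exact_mod_cast this
    linarith
  · simp only [hmem, if_false]
    rcases hs with h1 | h2
    · exact absurd h1 hmem
    · have := (h (-s) h2).2
      have h3 : (p * s.1 + q * s.2 : ℤ) ≤ 2 := by
        simp only [Prod.fst_neg, Prod.snd_neg] at this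
        linarith
      have : ((p * s.1 + q * s.2 : ℤ) : ℝ) ≤ 2 := by exact_mod_cast h3
      linarith

lemma pathLen_bound (p q : ℤ)
    (h : ∀ s ∈ fwdSteps, p * s.1 + q * s.2 ≤ 1 ∧ -(p * s.1 + q * s.2) ≤ 2) :
    ∀ l : List (ℤ × ℤ), (∀ s ∈ l, IsStep s) →
      ((p * l.sum.1 + q * l.sum.2 : ℤ) : ℝ) ≤ 3 * pathLen l := by
  intro l
  induction l with
  | nil => intro _; simp [pathLen]
  | cons s t ih =>
    intro hl
    have hs := step_bound p q h s (hl s List.mem_cons_self)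
    have ht := ih (fun x hx => hl x (List.mem_cons_of_mem s hx))
    have hsum : (s :: t).sum = s + t.sum := List.sum_cons
    have hpl : pathLen (s :: t) = stepCost s + pathLen t := by
      simp [pathLen]
    rw [hsum, hpl, Prod.fst_add, Prod.snd_add]
    push_cast
    push_cast at hs ht
    linarith

lemma stepCost_fwd (s : ℤ × ℤ) (hs : s ∈ fwdSteps) : stepCost s = 1/3 := by
  simp [stepCost, hs]

lemma mem_pathLengths (a b : ℤ × ℤ) :
    ((Dmax (b.1 - a.1) (b.2 - a.2) : ℤ) : ℝ) / 3 ∈ pathLengths a b := by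
  set x := b.1 - a.1 with hx
  set y := b.2 - a.2 with hy
  set c : ℤ := max 0 (max (-x) (-y)) with hc
  have hc0 : 0 ≤ c := le_max_left _ _
  have ha0 : 0 ≤ x + c := by omega
  have hb0 : 0 ≤ y + c := by omega
  set na := (x + c).toNat
  set nb := (y + c).toNat
  set nc := c.toNat
  refine ⟨List.replicate na (1,0) ++ List.replicate nb (0,1) ++ List.replicate nc (-1,-1),
    ?_, ?_, ?_⟩
  · intro s hs
    simp only [List.mem_append, List.mem_replicate] at hs
    rcases hs with (⟨_, rfl⟩ | ⟨_, rfl⟩) | ⟨_, rfl⟩ <;>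
      exact Or.inl (by simp [fwdSteps])
  · have hsum : (List.replicate na ((1:ℤ),(0:ℤ)) ++ List.replicate nb (0,1) ++
        List.replicate nc (-1,-1)).sum =
        (na : ℤ) • ((1:ℤ),(0:ℤ)) + (nb : ℤ) • ((0:ℤ),(1:ℤ)) + (nc : ℤ) • ((-1:ℤ),(-1:ℤ)) := by
      simp [List.sum_append, List.sum_replicate]
    rw [hsum]
    have hna : (na : ℤ) = x + c := Int.toNat_of_nonneg ha0
    have hnb : (nb : ℤ) = y + c := Int.toNat_of_nonneg hb0
    have hnc : (nc : ℤ) = c := Int.toNat_of_nonneg hc0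
    ext
    · simp [Prod.fst_add, hna, hnb, hnc]; omega
    · simp [Prod.snd_add, hna, hnb, hnc]; omega
  · have hcost : ∀ (n : ℕ) (s : ℤ × ℤ), s ∈ fwdSteps →
        pathLen (List.replicate n s) = n * (1/3) := by
      intro n s hs
      simp [pathLen, List.map_replicate, stepCost_fwd s hs, List.sum_replicate, nsmul_eq_mul]
    have h1 : pathLen (List.replicate na ((1:ℤ),(0:ℤ)) ++ List.replicate nb (0,1) ++
        List.replicate nc (-1,-1)) = (na + nb + nc : ℕ) * (1/3) := by
      simp only [pathLen, List.map_append, List.sum_append]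
      have e1 := hcost na (1,0) (by simp [fwdSteps])
      have e2 := hcost nb (0,1) (by simp [fwdSteps])
      have e3 := hcost nc (-1,-1) (by simp [fwdSteps])
      simp only [pathLen] at e1 e2 e3
      rw [e1, e2, e3]
      push_cast
      ring
    rw [h1]
    have hD : ((na + nb + nc : ℕ) : ℤ) = Dmax x y := by
      have hna : (na : ℤ) = x + c := Int.toNat_of_nonneg ha0
      have hnb : (nb : ℤ) = y + c := Int.toNat_of_nonneg hb0
      have hnc : (nc : ℤ) = c := Int.toNat_of_nonneg hc0
      unfold Dmax
      push_cast
      omega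
    have : ((na + nb + nc : ℕ) : ℝ) = ((Dmax x y : ℤ) : ℝ) := by exact_mod_cast hD
    rw [← this]
    ring

lemma latticeDist_eq (a b : ℤ × ℤ) :
    latticeDist a b = ((Dmax (b.1 - a.1) (b.2 - a.2) : ℤ) : ℝ) / 3 := by
  have hmem := mem_pathLengths a b
  apply le_antisymm
  · apply csInf_le _ hmem
    refine ⟨0, ?_⟩
    rintro r ⟨l, hl, hsum, rfl⟩
    unfold pathLen
    apply List.sum_nonneg
    intro r hr
    rw [List.mem_map] at hr
    obtain ⟨s, _, rfl⟩ := hr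
    unfold stepCost
    split <;> norm_num
  · apply le_csInf ⟨_, hmem⟩
    rintro r ⟨l, hl, hsum, rfl⟩
    have hx : l.sum.1 = b.1 - a.1 := by
      have := congrArg Prod.fst hsum; simp at this; omega
    have hy : l.sum.2 = b.2 - a.2 := by
      have := congrArg Prod.snd hsum; simp at this; omega
    set x := b.1 - a.1
    set y := b.2 - a.2
    have h1 := pathLen_bound 1 1 (by decide) l hl
    have h2 := pathLen_bound (-2) 1 (by decide) l hl
    have h3 := pathLen_bound 1 (-2) (by decide) l hl
    rw [hx, hy] at h1 h2 h3
    have hD : Dmax x y = x + y ∨ Dmax x y = y - 2*x ∨ Dmax x y = x - 2*y := by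
      unfold Dmax; omega
    push_cast at h1 h2 h3
    rcases hD with h | h | h <;> rw [h] <;> push_cast <;> linarith

/-- if the region `Ω` determined by `A, B, C` is nonempty, then for every
`X ∈ ℤ²` we have `d(A,X) + d(B,X) + d(C,X) ≥ (-a1-a2+2b1-b2-c1+2c2)/3`, with equality
exactly when `X ∈ Ω`. -/
theorem lattice_dist_tripod (a1 a2 b1 b2 c1 c2 : ℤ)
    (hΩ : ∃ x y : ℤ, a1 ≤ x ∧ x ≤ b1 ∧ a2 ≤ y ∧ y ≤ c2 ∧
      b2 - b1 ≤ y - x ∧ y - x ≤ c2 - c1) :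
    ∀ X : ℤ × ℤ,
      (((-a1 - a2 + 2 * b1 - b2 - c1 + 2 * c2 : ℤ) : ℝ) / 3 ≤
        latticeDist (a1, a2) X + latticeDist (b1, b2) X + latticeDist (c1, c2) X) ∧
      (latticeDist (a1, a2) X + latticeDist (b1, b2) X + latticeDist (c1, c2) X =
          ((-a1 - a2 + 2 * b1 - b2 - c1 + 2 * c2 : ℤ) : ℝ) / 3 ↔
        (a1 ≤ X.1 ∧ X.1 ≤ b1 ∧ a2 ≤ X.2 ∧ X.2 ≤ c2 ∧
          b2 - b1 ≤ X.2 - X.1 ∧ X.2 - X.1 ≤ c2 - c1)) := by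
  rintro ⟨x, y⟩
  simp only [latticeDist_eq]
  have hge : (-a1 - a2 + 2 * b1 - b2 - c1 + 2 * c2 : ℤ) ≤
      Dmax (x - a1) (y - a2) + Dmax (x - b1) (y - b2) + Dmax (x - c1) (y - c2) := by
    unfold Dmax; omega
  have heq : (Dmax (x - a1) (y - a2) + Dmax (x - b1) (y - b2) + Dmax (x - c1) (y - c2) =
      (-a1 - a2 + 2 * b1 - b2 - c1 + 2 * c2 : ℤ)) ↔
      (a1 ≤ x ∧ x ≤ b1 ∧ a2 ≤ y ∧ y ≤ c2 ∧ b2 - b1 ≤ y - x ∧ y - x ≤ c2 - c1) := by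
    unfold Dmax; omega
  set d1 := Dmax (x - a1) (y - a2) with hd1
  set d2 := Dmax (x - b1) (y - b2) with hd2
  set d3 := Dmax (x - c1) (y - c2) with hd3
  set K := (-a1 - a2 + 2 * b1 - b2 - c1 + 2 * c2 : ℤ) with hKdef
  constructor
  · have h1 : ((K : ℤ) : ℝ) ≤ ((d1 + d2 + d3 : ℤ) : ℝ) := by exact_mod_cast hge
    push_cast at h1 ⊢
    linarith
  · rw [← heq]
    constructor
    · intro h
      have h2 : ((d1 + d2 + d3 : ℤ) : ℝ) = ((K : ℤ) : ℝ) := by push_cast; push_cast at h; linarith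
      exact_mod_cast h2
    · intro h
      have h2 : ((d1 + d2 + d3 : ℤ) : ℝ) = ((K : ℤ) : ℝ) := by exact_mod_cast h
      push_cast at h2 ⊢
      linarith
end

section
/- Let A1 = (a,0), A2 = (b,0), A3 = (c,0) with c ≤ a ≤ b be three points on the x-axis in the lattice graph Γ. Then the minimum over X ∈ Z^2 of d(A1,X) + d(A2,X) + d(A3,X) is attained at some point Y on the x-axis. -/
def Mf (v : ℤ × ℤ) : ℤ := max (v.1 + v.2) (max (v.2 - 2*v.1) (v.1 - 2*v.2))

lemma stepCost_nonneg (s : ℤ × ℤ) : 0 ≤ stepCost s := by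
  unfold stepCost; split <;> norm_num

lemma pathLen_nonneg (l : List (ℤ × ℤ)) : 0 ≤ pathLen l :=
  List.sum_nonneg (by rintro x hx; simp only [List.mem_map] at hx
                      obtain ⟨s, _, rfl⟩ := hx; exact stepCost_nonneg s)

lemma step_bound_s10 (s : ℤ × ℤ) (hs : IsStep s) (v : ℤ × ℤ) :
    (Mf (v + s) : ℝ) ≤ Mf v + 3 * stepCost s := by
  have key : ∀ k : ℤ, Mf (v + s) ≤ Mf v + k → (k : ℝ) ≤ 3 * stepCost s →
      (Mf (v + s) : ℝ) ≤ Mf v + 3 * stepCost s := by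
    intro k h1 h2
    calc (Mf (v + s) : ℝ) ≤ (Mf v : ℝ) + k := by exact_mod_cast h1
      _ ≤ Mf v + 3 * stepCost s := by linarith
  rcases hs with h | h <;>
    simp only [fwdSteps, List.mem_cons, List.not_mem_nil, or_false,
      neg_eq_iff_eq_neg] at h <;>
    rcases h with h | h | h <;> subst h <;>
    first
    | exact key 1 (by simp [Mf]; omega) (by norm_num [stepCost, fwdSteps])
    | exact key 2 (by simp [Mf, Prod.ext_iff]; omega)
        (by norm_num [stepCost, fwdSteps, Prod.ext_iff])

lemma pathLen_ge (l : List (ℤ × ℤ)) (h : ∀ s ∈ l, IsStep s) :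
    (Mf l.sum : ℝ) / 3 ≤ pathLen l := by
  induction l with
  | nil => simp [pathLen, Mf]
  | cons s t ih =>
    have hih := ih (fun x hx => h x (List.mem_cons_of_mem _ hx))
    have hb := step_bound_s10 s (h s List.mem_cons_self) t.sum
    have : (s :: t).sum = t.sum + s := by rw [List.sum_cons]; ring
    rw [this]
    have : pathLen (s :: t) = stepCost s + pathLen t := by
      simp [pathLen]
    rw [this]
    linarith

lemma bddBelow_pathLengths (a b : ℤ × ℤ) : BddBelow (pathLengths a b) := by
  refine ⟨0, ?_⟩
  rintro r ⟨l, _, _, rfl⟩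
  exact pathLen_nonneg l

lemma pathLengths_nonempty (a b : ℤ × ℤ) : (pathLengths a b).Nonempty := by
  obtain ⟨v, rfl⟩ : ∃ v, a + v = b := ⟨b - a, by ring⟩
  set l1 : List (ℤ × ℤ) :=
    if 0 ≤ v.1 then List.replicate v.1.toNat (1, 0)
    else List.replicate (-v.1).toNat (-1, 0) with hl1
  set l2 : List (ℤ × ℤ) :=
    if 0 ≤ v.2 then List.replicate v.2.toNat (0, 1)
    else List.replicate (-v.2).toNat (0, -1) with hl2
  refine ⟨pathLen (l1 ++ l2), l1 ++ l2, ?_, ?_, rfl⟩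
  · intro s hs
    rcases List.mem_append.1 hs with hs | hs
    · rw [hl1] at hs; split_ifs at hs <;> rw [List.eq_of_mem_replicate hs] <;>
        simp [IsStep, fwdSteps]
    · rw [hl2] at hs; split_ifs at hs <;> rw [List.eq_of_mem_replicate hs] <;>
        simp [IsStep, fwdSteps]
  · have h1 : l1.sum = (v.1, 0) := by
      rw [hl1]; split_ifs with h <;>
        simp [List.sum_replicate, Prod.ext_iff] <;> omega
    have h2 : l2.sum = (0, v.2) := by
      rw [hl2]; split_ifs with h <;>
        simp [List.sum_replicate, Prod.ext_iff] <;> omega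
    rw [List.sum_append, h1, h2, Prod.ext_iff]
    simp

lemma latticeDist_ge (a b : ℤ × ℤ) : (Mf (b - a) : ℝ) / 3 ≤ latticeDist a b := by
  apply le_csInf (pathLengths_nonempty a b)
  rintro r ⟨l, hsteps, hsum, rfl⟩
  have : l.sum = b - a := by rw [← hsum]; ring
  rw [← this]
  exact pathLen_ge l hsteps

lemma dist_le (a b : ℤ × ℤ) (r : ℝ) (h : r ∈ pathLengths a b) : latticeDist a b ≤ r :=
  csInf_le (bddBelow_pathLengths a b) h

lemma pathLen_replicate (n : ℕ) (s : ℤ × ℤ) :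
    pathLen (List.replicate n s) = n * stepCost s := by
  simp [pathLen, List.map_replicate, List.sum_replicate, nsmul_eq_mul]

/-- for `A₁ = (a,0)`, `A₂ = (b,0)`, `A₃ = (c,0)` with `c ≤ a ≤ b`, the
minimum of `d(A₁,X) + d(A₂,X) + d(A₃,X)` over `X ∈ ℤ²` is attained at a point `Y` on
the x-axis. -/
theorem tripod_min_on_x_axis (a b c : ℤ) (hca : c ≤ a) (hab : a ≤ b) :
    ∃ y : ℤ, ∀ X : ℤ × ℤ,
      latticeDist (a, 0) (y, 0) + latticeDist (b, 0) (y, 0) + latticeDist (c, 0) (y, 0) ≤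
        latticeDist (a, 0) X + latticeDist (b, 0) X + latticeDist (c, 0) X := by
  refine ⟨a, fun X => ?_⟩
  -- upper bounds at Y = (a, 0)
  have h1 : latticeDist (a, 0) (a, 0) ≤ 0 := by
    apply dist_le
    exact ⟨[], by simp, by simp, by simp [pathLen]⟩
  have h2 : latticeDist (b, 0) (a, 0) ≤ 2 * (b - a) / 3 := by
    apply dist_le
    refine ⟨List.replicate (b - a).toNat (-1, 0), ?_, ?_, ?_⟩
    · intro s hs; rw [List.eq_of_mem_replicate hs]; right; simp [fwdSteps]
    · simp only [List.sum_replicate, smul_eq_mul, Prod.ext_iff, Prod.fst_add, Prod.snd_add]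
      constructor
      · simp [Prod.smul_def]; omega
      · simp [Prod.smul_def]
    · rw [pathLen_replicate]
      have : stepCost (-1, 0) = 2/3 := by norm_num [stepCost, fwdSteps, Prod.ext_iff]
      rw [this]
      have : ((b - a).toNat : ℝ) = (b : ℝ) - a := by
        have : ((b - a).toNat : ℤ) = b - a := Int.toNat_of_nonneg (by omega)
        exact_mod_cast this
      rw [this]; ring
  have h3 : latticeDist (c, 0) (a, 0) ≤ (a - c) / 3 := by
    apply dist_le
    refine ⟨List.replicate (a - c).toNat (1, 0), ?_, ?_, ?_⟩
    · intro s hs; rw [List.eq_of_mem_replicate hs]; left; simp [fwdSteps]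
    · simp only [List.sum_replicate, Prod.ext_iff, Prod.fst_add, Prod.snd_add]
      constructor
      · simp [Prod.smul_def]; omega
      · simp [Prod.smul_def]
    · rw [pathLen_replicate]
      have : stepCost (1, 0) = 1/3 := by norm_num [stepCost, fwdSteps]
      rw [this]
      have : ((a - c).toNat : ℝ) = (a : ℝ) - c := by
        have : ((a - c).toNat : ℤ) = a - c := Int.toNat_of_nonneg (by omega)
        exact_mod_cast this
      rw [this]; ring
  -- lower bounds at X
  have g1 := latticeDist_ge (a, 0) X
  have g2 := latticeDist_ge (b, 0) X
  have g3 := latticeDist_ge (c, 0) X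
  have key : 2 * b - a - c ≤
      Mf (X - (a, 0)) + Mf (X - (b, 0)) + Mf (X - (c, 0)) := by
    simp only [Mf, Prod.fst_sub, Prod.snd_sub]
    simp; omega
  have keyR : (2 * (b:ℝ) - a - c) / 3 ≤
      (Mf (X - (a, 0)) : ℝ) / 3 + (Mf (X - (b, 0)) : ℝ) / 3 + (Mf (X - (c, 0)) : ℝ) / 3 := by
    have : ((2 * b - a - c : ℤ) : ℝ) ≤
        ((Mf (X - (a, 0)) + Mf (X - (b, 0)) + Mf (X - (c, 0)) : ℤ) : ℝ) := by
      exact_mod_cast key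
    push_cast at this
    linarith
  linarith
end
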